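/- If a hex in a bipartite graph has at most three odd segments, then at least five of its six feet lie in the same part of the bipartition. -/

import Mathlib

open SimpleGraph

universe u

variable {V : Type u}

/-- A planar embedding of a simple graph: vertices go to distinct points of the plane and
edges to arcs (injective topological paths) that meet only at common endpoints. -/
structure PlanarEmbedding (G : SimpleGraph V) where
  vmap : V → ℝ × ℝ
  vmap_inj : Function.Injective vmap
  arc : ∀ ⦃x y : V⦄, G.Adj x y → _root_.Path (vmap x) (vmap y)
  arc_inj : ∀ ⦃x y : V⦄ (h : G.Adj x y), Function.Injective ⇑(arc h)
  arc_symm : ∀ ⦃x y : V⦄ (h : G.Adj x y), Set.range ⇑(arc h) = Set.range ⇑(arc h.symm)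
  arc_vertex : ∀ ⦃x y : V⦄ (h : G.Adj x y) (w : V), vmap w ∈ Set.range ⇑(arc h) → w = x ∨ w = y
  arc_disjoint : ∀ ⦃x y x' y' : V⦄ (h : G.Adj x y) (h' : G.Adj x' y'),
      s(x, y) ≠ s(x', y') →
      Set.range ⇑(arc h) ∩ Set.range ⇑(arc h') ⊆
        ({vmap x, vmap y} ∩ {vmap x', vmap y'} : Set (ℝ × ℝ))

/-- A graph is planar if it admits a planar embedding. -/
def SimpleGraph.IsPlanar (G : SimpleGraph V) : Prop := Nonempty (PlanarEmbedding G)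

/-- `(A, B)` is a bipartition of `G`. -/
def SimpleGraph.IsBipartition (G : SimpleGraph V) (A B : Set V) : Prop :=
  Disjoint A B ∧ A ∪ B = Set.univ ∧
    ∀ ⦃x y : V⦄, G.Adj x y → (x ∈ A ∧ y ∈ B) ∨ (x ∈ B ∧ y ∈ A)

/-- A finite graph is 3-connected: more than 3 vertices and removing at most 2 vertices
leaves a connected graph. -/
def SimpleGraph.ThreeConnected [Fintype V] (G : SimpleGraph V) : Prop :=
  4 ≤ Fintype.card V ∧ ∀ S : Set V, S.ncard ≤ 2 → (G.induce Sᶜ).Connected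

/-- Internally 4-connected: 3-connected, at least five vertices, and no partition
`(A, B, C)` of the vertices with `|A|, |B| ≥ 2`, `|C| = 3` and no edge between `A` and `B`. -/
def SimpleGraph.InternallyFourConnected [Fintype V] (G : SimpleGraph V) : Prop :=
  G.ThreeConnected ∧ 5 ≤ Fintype.card V ∧
    ¬ ∃ A B C : Set V, A ∪ B ∪ C = Set.univ ∧ Disjoint A B ∧ Disjoint A C ∧ Disjoint B C ∧
      2 ≤ A.ncard ∧ 2 ≤ B.ncard ∧ C.ncard = 3 ∧ ∀ x ∈ A, ∀ y ∈ B, ¬ G.Adj x y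

/-- A hex in `G`: a subdivision of `K_{3,3}` with feet `fA 0, fA 1, fA 2` on one side and
`fB 0, fB 1, fB 2` on the other, and nine internally disjoint segments `seg i j`. -/
structure SimpleGraph.Hex (G : SimpleGraph V) where
  fA : Fin 3 → V
  fB : Fin 3 → V
  injA : Function.Injective fA
  injB : Function.Injective fB
  disjAB : ∀ i j, fA i ≠ fB j
  seg : (i j : Fin 3) → G.Walk (fA i) (fB j)
  seg_path : ∀ i j, (seg i j).IsPath
  seg_meet : ∀ i j i' j', (i, j) ≠ (i', j') → ∀ x : V, x ∈ (seg i j).support →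
      x ∈ (seg i' j').support → (x = fA i ∧ i = i') ∨ (x = fB j ∧ j = j')

/-- The number of odd segments of a hex. -/
noncomputable def SimpleGraph.Hex.oddCount {G : SimpleGraph V} (H : G.Hex) : ℕ :=
  (Finset.univ.filter fun p : Fin 3 × Fin 3 => Odd (H.seg p.1 p.2).length).card

/-- A hex is odd if all nine segments have odd length. -/
def SimpleGraph.Hex.IsOdd {G : SimpleGraph V} (H : G.Hex) : Prop :=
  ∀ i j, Odd (H.seg i j).length

/-- A hex is optimal if no hex of `G` has strictly more odd segments. -/
def SimpleGraph.Hex.Optimal {G : SimpleGraph V} (H : G.Hex) : Prop :=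
  ∀ H' : G.Hex, H'.oddCount ≤ H.oddCount

/-- The vertex set of a walk, as a set. -/
def SimpleGraph.Walk.supp {G : SimpleGraph V} {x y : V} (w : G.Walk x y) : Set V :=
  {z | z ∈ w.support}

/-- The vertex set of a hex. -/
def SimpleGraph.Hex.suppSet {G : SimpleGraph V} (H : G.Hex) : Set V :=
  ⋃ (i : Fin 3) (j : Fin 3), (H.seg i j).supp

/-- The edge set of a hex. -/
def SimpleGraph.Hex.edgeSetH {G : SimpleGraph V} (H : G.Hex) : Set (Sym2 V) :=
  ⋃ (i : Fin 3) (j : Fin 3), {e | e ∈ (H.seg i j).edges}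

lemma bip_not_mem {G : SimpleGraph V} {A B : Set V} (hbip : G.IsBipartition A B) (x : V) :
    x ∈ B ↔ ¬ x ∈ A := by
  obtain ⟨hd, hu, -⟩ := hbip
  constructor
  · intro hB hA; exact (Set.disjoint_left.mp hd hA) hB
  · intro hA
    have : x ∈ A ∪ B := hu ▸ Set.mem_univ x
    rcases this with h | h
    · exact absurd h hA
    · exact h

lemma walk_parity {G : SimpleGraph V} {A B : Set V} (hbip : G.IsBipartition A B) :
    ∀ {x y : V} (w : G.Walk x y), Even w.length ↔ (x ∈ A ↔ y ∈ A) := by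
  intro x y w
  induction w with
  | nil => simp
  | @cons x z y h w ih =>
    have hxz : x ∈ A ↔ ¬ z ∈ A := by
      rcases hbip.2.2 h with ⟨hx, hz⟩ | ⟨hx, hz⟩
      · simp [hx, ((bip_not_mem hbip z).mp hz)]
      · simp [((bip_not_mem hbip x).mp hx), hz]
    rw [SimpleGraph.Walk.length_cons, Nat.even_add_one, ih]
    tauto

lemma count_key : ∀ f g : Fin 3 → Bool,
    (Finset.univ.filter fun p : Fin 3 × Fin 3 => f p.1 ≠ g p.2).card ≤ 3 →
    5 ≤ (Finset.univ.filter fun i => f i = true).card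
        + (Finset.univ.filter fun j => g j = true).card ∨
    5 ≤ (Finset.univ.filter fun i => f i = false).card
        + (Finset.univ.filter fun j => g j = false).card := by decide

/-- If a hex in a bipartite graph has at most three odd segments, then at least five of its
six feet lie in the same part of the bipartition. -/
theorem stmt_7 {V : Type u} (G : SimpleGraph V) (A B : Set V)
    (hbip : G.IsBipartition A B) (H : G.Hex) (h3 : H.oddCount ≤ 3) :
    5 ≤ {i : Fin 3 | H.fA i ∈ A}.ncard + {j : Fin 3 | H.fB j ∈ A}.ncard ∨
      5 ≤ {i : Fin 3 | H.fA i ∈ B}.ncard + {j : Fin 3 | H.fB j ∈ B}.ncard := by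
  classical
  set f : Fin 3 → Bool := fun i => decide (H.fA i ∈ A) with hf
  set g : Fin 3 → Bool := fun j => decide (H.fB j ∈ A) with hg
  have hodd : ∀ i j, Odd (H.seg i j).length ↔ f i ≠ g j := by
    intro i j
    rw [← Nat.not_even_iff_odd, walk_parity hbip]
    simp [hf, hg, decide_eq_decide]
  have hcount : H.oddCount
      = (Finset.univ.filter fun p : Fin 3 × Fin 3 => f p.1 ≠ g p.2).card := by
    unfold SimpleGraph.Hex.oddCount
    congr 1
    apply Finset.filter_congr
    intro p _
    simp [hodd p.1 p.2]
  have key := count_key f g (by rw [← hcount]; exact h3)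
  have e1 : {i : Fin 3 | H.fA i ∈ A}.ncard = (Finset.univ.filter fun i => f i = true).card := by
    rw [Set.ncard_eq_toFinset_card']
    congr 1
    ext i
    simp [hf]
  have e2 : {j : Fin 3 | H.fB j ∈ A}.ncard = (Finset.univ.filter fun j => g j = true).card := by
    rw [Set.ncard_eq_toFinset_card']
    congr 1
    ext j
    simp [hg]
  have e3 : {i : Fin 3 | H.fA i ∈ B}.ncard = (Finset.univ.filter fun i => f i = false).card := by
    rw [Set.ncard_eq_toFinset_card']
    congr 1
    ext i
    simp [hf, bip_not_mem hbip]
  have e4 : {j : Fin 3 | H.fB j ∈ B}.ncard = (Finset.univ.filter fun j => g j = false).card := by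
    rw [Set.ncard_eq_toFinset_card']
    congr 1
    ext j
    simp [hg, bip_not_mem hbip]
  rw [e1, e2, e3, e4]
  exact key
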